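/- Let x = (x₁, x₂) : ℝ → ℝ² be a differentiable solution of the nonlinear system x₁' = −x₂ + x₁(1 − x₁² − x₂²), x₂' = x₁ + x₂(1 − x₁² − x₂²), and suppose that for all t the radius r(t) := √(x₁(t)² + x₂(t)²) satisfies r(t) > 0 and r(t) ≠ 1. Then the function ŷ₁(t) := ln( r(t) / √|1 − r(t)²| ) is a unit manifold coordinate: ŷ₁'(t) = 1 for all t, i.e. ŷ₁(t) = ŷ₁(0) + t. -/

import Mathlib

/-- Along any solution of the planar limit-cycle system whose radius
`r = √(x₁² + x₂²)` satisfies `r > 0` and `r ≠ 1` for all times, the canonical split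
coordinate `ŷ₁ = ln(r/√|1 − r²|)` is a unit manifold coordinate: `ŷ₁' = 1`, i.e.
`ŷ₁(t) = ŷ₁(0) + t`. -/
theorem limit_cycle_unit_manifold
    (x₁ x₂ : ℝ → ℝ)
    (hx₁ : ∀ t : ℝ, HasDerivAt x₁ (-x₂ t + x₁ t * (1 - (x₁ t) ^ 2 - (x₂ t) ^ 2)) t)
    (hx₂ : ∀ t : ℝ, HasDerivAt x₂ (x₁ t + x₂ t * (1 - (x₁ t) ^ 2 - (x₂ t) ^ 2)) t)
    (r : ℝ → ℝ) (hr : ∀ t : ℝ, r t = Real.sqrt ((x₁ t) ^ 2 + (x₂ t) ^ 2))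
    (hrpos : ∀ t : ℝ, 0 < r t) (hrne : ∀ t : ℝ, r t ≠ 1) :
    (∀ t : ℝ, HasDerivAt (fun s => Real.log (r s / Real.sqrt |1 - (r s) ^ 2|)) 1 t) ∧
    (∀ t : ℝ, Real.log (r t / Real.sqrt |1 - (r t) ^ 2|) =
      Real.log (r 0 / Real.sqrt |1 - (r 0) ^ 2|) + t) := by
  set u : ℝ → ℝ := fun s => (x₁ s) ^ 2 + (x₂ s) ^ 2 with hu
  have hupos : ∀ t, 0 < u t := by
    intro t
    have := hrpos t
    rw [hr t] at this
    nlinarith [Real.sq_sqrt (by positivity : (0:ℝ) ≤ u t), Real.sqrt_nonneg (u t)]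
  have hru : ∀ t, (r t) ^ 2 = u t := by
    intro t
    rw [hr t, Real.sq_sqrt (by positivity)]
  have hune : ∀ t, u t ≠ 1 := by
    intro t h
    apply hrne t
    have h2 : (r t) ^ 2 = 1 := by rw [hru t, h]
    nlinarith [hrpos t]
  have hu' : ∀ t, HasDerivAt u (2 * u t * (1 - u t)) t := by
    intro t
    have h := ((hx₁ t).pow 2).add ((hx₂ t).pow 2)
    refine h.congr_deriv ?_
    simp only [hu]
    push_cast
    ring
  -- rewrite the function
  have hfun : ∀ s, Real.log (r s / Real.sqrt |1 - (r s) ^ 2|)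
      = (1/2) * (Real.log (u s) - Real.log (1 - u s)) := by
    intro s
    have h1 : (1:ℝ) - u s ≠ 0 := by
      intro h; exact hune s (by linarith)
    have habs : |1 - (r s) ^ 2| = |1 - u s| := by rw [hru s]
    have hsne : Real.sqrt |1 - (r s) ^ 2| ≠ 0 := by
      rw [habs]
      exact Real.sqrt_ne_zero'.2 (abs_pos.2 h1)
    rw [Real.log_div (ne_of_gt (hrpos s)) hsne, habs,
      Real.log_sqrt (abs_nonneg _), Real.log_abs]
    have : Real.log (r s) = (1/2) * Real.log (u s) := by
      rw [← hru s, Real.log_pow]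
      push_cast
      ring
    rw [this]; ring
  have hderiv : ∀ t, HasDerivAt (fun s => Real.log (r s / Real.sqrt |1 - (r s) ^ 2|)) 1 t := by
    intro t
    have h1 : (1:ℝ) - u t ≠ 0 := by intro h; exact hune t (by linarith)
    have hu0 : u t ≠ 0 := ne_of_gt (hupos t)
    have hlog1 : HasDerivAt (fun s => Real.log (u s)) ((2 * u t * (1 - u t)) / u t) t :=
      (hu' t).log hu0
    have hlog2 : HasDerivAt (fun s => Real.log (1 - u s))
        ((0 - 2 * u t * (1 - u t)) / (1 - u t)) t :=
      (((hasDerivAt_const t (1:ℝ)).sub (hu' t)).log h1)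
    have h : HasDerivAt (fun s => (1/2) * (Real.log (u s) - Real.log (1 - u s)))
        ((1/2) * ((2 * u t * (1 - u t)) / u t - (0 - 2 * u t * (1 - u t)) / (1 - u t))) t :=
      (hlog1.sub hlog2).const_mul (1/2)
    have heq : (1/2) * ((2 * u t * (1 - u t)) / u t - (0 - 2 * u t * (1 - u t)) / (1 - u t)) = 1 := by
      field_simp
      ring
    rw [heq] at h
    exact h.congr_deriv rfl |>.congr_of_eventuallyEq (Filter.Eventually.of_forall fun s => (hfun s))
  refine ⟨hderiv, ?_⟩
  intro t
  have hg : ∀ s, HasDerivAt (fun s => Real.log (r s / Real.sqrt |1 - (r s) ^ 2|) - s) 0 s := by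
    intro s
    exact ((hderiv s).sub (hasDerivAt_id' s)).congr_deriv (by norm_num)
  have hc := is_const_of_deriv_eq_zero (f := fun s => Real.log (r s / Real.sqrt |1 - (r s) ^ 2|) - s)
      (fun s => (hg s).differentiableAt) (fun s => (hg s).deriv) t 0
  simp only [sub_zero] at hc
  linarith [hc]
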